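/- Let $G$ be a real symmetric positive definite $n\times n$ matrix whose off-diagonal entries are all nonpositive ($G_{ij} \le 0$ for $i \neq j$). Then every entry of the inverse matrix $G^{-1}$ is nonnegative. Consequently, if $S \in \mathbb{R}^n$ satisfies $G S \ge 0$ entrywise, then $S \ge 0$ entrywise. -/

import Mathlib

open Matrix

lemma aux_key {n : ℕ} (G : Matrix (Fin n) (Fin n) ℝ)
    (hpos : G.PosDef) (hoff : ∀ i j, i ≠ j → G i j ≤ 0)
    (S : Fin n → ℝ) (hS : ∀ i, 0 ≤ G.mulVec S i) : ∀ i, 0 ≤ S i := by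
  set N : Fin n → ℝ := fun i => max (-S i) 0 with hN
  set P : Fin n → ℝ := fun i => max (S i) 0 with hP
  have hNnn : ∀ i, 0 ≤ N i := fun i => le_max_right _ _
  have hPnn : ∀ i, 0 ≤ P i := fun i => le_max_right _ _
  have hdecomp : ∀ i, S i = P i - N i := by
    intro i; simp [hN, hP, max_def]; split_ifs with h1 h2 h2 <;> linarith
  have hNP : ∀ i, N i * P i = 0 := by
    intro i
    rcases le_total (S i) 0 with h | h
    · have : P i = 0 := max_eq_right h
      rw [this, mul_zero]
    · have : N i = 0 := max_eq_right (by linarith)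
      rw [this, zero_mul]
  have key : N ⬝ᵥ G.mulVec N ≤ 0 := by
    have h1 : N ⬝ᵥ G.mulVec N = N ⬝ᵥ G.mulVec P - N ⬝ᵥ G.mulVec S := by
      have hSPN : S = P - N := by
        funext i; rw [Pi.sub_apply]; exact hdecomp i
      rw [hSPN, Matrix.mulVec_sub, dotProduct_sub]; ring
    have h2 : N ⬝ᵥ G.mulVec P ≤ 0 := by
      rw [dotProduct]
      apply Finset.sum_nonpos
      intro i _
      rw [Matrix.mulVec, dotProduct, Finset.mul_sum]
      apply Finset.sum_nonpos
      intro j _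
      by_cases h : i = j
      · subst h
        have heq : N i * (G i i * P i) = G i i * (N i * P i) := by ring
        rw [heq, hNP i, mul_zero]
      · have hG := hoff i j h
        have h4 : 0 ≤ N i * P j := mul_nonneg (hNnn i) (hPnn j)
        nlinarith
    have h3 : 0 ≤ N ⬝ᵥ G.mulVec S := by
      apply Finset.sum_nonneg
      intro i _
      exact mul_nonneg (hNnn i) (hS i)
    linarith
  have hN0 : N = 0 := by
    by_contra h
    have := hpos.dotProduct_mulVec_pos h
    have hst : star N = N := rfl
    rw [hst] at this
    linarith
  intro i
  have : N i = 0 := congrFun hN0 i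
  have := hdecomp i
  have := hPnn i
  linarith

theorem stmt_0 {n : ℕ} (G : Matrix (Fin n) (Fin n) ℝ)
    (hsymm : G.IsSymm) (hpos : G.PosDef)
    (hoff : ∀ i j, i ≠ j → G i j ≤ 0) :
    (∀ i j, 0 ≤ G⁻¹ i j) ∧
      ∀ S : Fin n → ℝ, (∀ i, 0 ≤ G.mulVec S i) → ∀ i, 0 ≤ S i := by
  constructor
  · intro i j
    have hinv : G * G⁻¹ = 1 :=
      Matrix.mul_nonsing_inv G (isUnit_iff_ne_zero.mpr hpos.det_pos.ne')
    have := aux_key G hpos hoff (fun k => G⁻¹ k j) ?_ i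
    · exact this
    · intro k
      have : G.mulVec (fun l => G⁻¹ l j) k = (G * G⁻¹) k j := by
        simp [Matrix.mulVec, dotProduct, Matrix.mul_apply]
      rw [this, hinv]
      by_cases h : k = j <;> simp [Matrix.one_apply, h]
  · exact aux_key G hpos hoff
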